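/- Let X be a finite ground set with m ≥ 2 elements and define the set function f on X by f(S) = 0 if |S| ≤ 1 and f(S) = 1 if |S| ≥ 2. Then f is normalized and monotone, its supermodular width satisfies sm(f) = 1, and its supermodular degree satisfies sd(f) = m − 1. -/

import Mathlib

variable {α : Type*} [Fintype α] [DecidableEq α]

/-- The margin of `S` given `T`: `f(S|T) = f(S ∪ T) - f(T)`. -/
def margin (f : Finset α → ℝ) (S T : Finset α) : ℝ := f (S ∪ T) - f T

/-- A nonempty set `T` is supermodular w.r.t. `f` if there exist `S` and `v ∉ T` such that
`f({v}|S ∪ T) > f({v}|S ∪ T')` for every proper subset `T' ⊊ T`. -/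
def SupermodularSet (f : Finset α → ℝ) (T : Finset α) : Prop :=
  T.Nonempty ∧ ∃ (S : Finset α) (v : α), v ∉ T ∧
    ∀ T' : Finset α, T' ⊂ T → margin f {v} (S ∪ T') < margin f {v} (S ∪ T)

open Classical in
/-- Supermodular width: the maximum cardinality of a supermodular set (0 if none exists). -/
noncomputable def smWidth (f : Finset α → ℝ) : ℕ :=
  Finset.univ.powerset.sup fun T => if SupermodularSet f T then T.card else 0

open Classical in
/-- `Dep⁺(u)`: the set of `v ≠ u` such that `f({u}|S) > f({u}|S ∖ {v})` for some `S`. -/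
noncomputable def depPlus (f : Finset α → ℝ) (u : α) : Finset α :=
  Finset.univ.filter fun v => v ≠ u ∧ ∃ S : Finset α, margin f {u} (S \ {v}) < margin f {u} S

/-- Supermodular degree: `sd(f) = max_{u} |Dep⁺(u)|`. -/
noncomputable def smDegree (f : Finset α → ℝ) : ℕ :=
  Finset.univ.sup fun u : α => (depPlus f u).card

/-- on a ground set of `m ≥ 2` elements, the function with `f(S) = 0` for
`|S| ≤ 1` and `f(S) = 1` for `|S| ≥ 2` is normalized, monotone, has supermodular width 1
and supermodular degree `m - 1`. -/
theorem threshold_function_width_one_degree_max (m : ℕ) (hm : 2 ≤ m)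
    (hcard : Fintype.card α = m)
    (f : Finset α → ℝ) (hf : ∀ S : Finset α, f S = if S.card ≤ 1 then 0 else 1) :
    f ∅ = 0 ∧ (∀ S T : Finset α, S ⊆ T → f S ≤ f T) ∧
      smWidth f = 1 ∧ smDegree f = m - 1 := by

  classical
  have hmono : ∀ S T : Finset α, S ⊆ T → f S ≤ f T := by
    intro S T hST
    rw [hf, hf]
    have hc := Finset.card_le_card hST
    by_cases h2 : T.card ≤ 1
    · rw [if_pos (le_trans hc h2), if_pos h2]
    · rw [if_neg h2]; split_ifs <;> norm_num
  have hmargin_nonneg : ∀ (v : α) (W : Finset α), 0 ≤ margin f {v} W := by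
    intro v W
    have := hmono W ({v} ∪ W) Finset.subset_union_right
    simpa [margin] using this
  -- any supermodular set has card 1
  have key : ∀ T : Finset α, SupermodularSet f T → T.card = 1 := by
    intro T ⟨hne, S, v, hv, hlt⟩
    by_contra hne1
    have hT2 : 2 ≤ T.card := by
      have h1 : 1 ≤ T.card := Finset.card_pos.mpr hne
      omega
    obtain ⟨a, ha⟩ := hne
    have hsub : T.erase a ⊂ T := Finset.erase_ssubset ha
    have hlt' := hlt (T.erase a) hsub
    have hcardST : 2 ≤ (S ∪ T).card := le_trans hT2 (Finset.card_le_card Finset.subset_union_right)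
    have hcardSTv : 2 ≤ ({v} ∪ (S ∪ T)).card :=
      le_trans hcardST (Finset.card_le_card Finset.subset_union_right)
    have hmT : margin f {v} (S ∪ T) = 0 := by
      rw [margin, hf, hf]
      rw [if_neg (by omega), if_neg (by omega)]
      ring
    have := hmargin_nonneg v (S ∪ T.erase a)
    rw [hmT] at hlt'
    linarith
  have hAne : Nonempty α := by
    rw [← Fintype.card_pos_iff]; omega
  obtain ⟨w⟩ := hAne
  obtain ⟨v, hvw⟩ := Fintype.exists_ne_of_one_lt_card (by omega) w
  refine ⟨by simp [hf], hmono, ?_, ?_⟩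
  · -- smWidth = 1
    apply le_antisymm
    · apply Finset.sup_le
      intro T _
      split_ifs with h
      · exact le_of_eq (key T h)
      · exact Nat.zero_le 1
    · have hsm : SupermodularSet f ({w} : Finset α) := by
        refine ⟨Finset.singleton_nonempty w, ∅, v, Finset.notMem_singleton.mpr hvw, ?_⟩
        intro T' hT'
        rw [Finset.ssubset_singleton_iff.mp hT']
        have h1 : margin f {v} (∅ ∪ (∅ : Finset α)) = 0 := by
          simp [margin, hf]
        have h2 : margin f {v} (∅ ∪ ({w} : Finset α)) = 1 := by
          have : ({v} ∪ {w} : Finset α).card = 2 := by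
            rw [Finset.card_union_of_disjoint (Finset.disjoint_singleton.mpr hvw)]; simp
          simp [margin, hf, this, Finset.card_pair hvw]
        rw [h1, h2]; norm_num
      have hmem : ({w} : Finset α) ∈ Finset.univ.powerset := by simp
      have h := Finset.le_sup (f := fun T : Finset α => if SupermodularSet f T then T.card else 0) hmem
      simp only [if_pos hsm, Finset.card_singleton] at h
      exact h
  · -- smDegree = m - 1
    have hdep : ∀ u : α, depPlus f u = Finset.univ.erase u := by
      intro u
      rw [depPlus, ← Finset.filter_ne']
      apply Finset.filter_congr
      intro v' _
      simp only [ne_eq, and_iff_left_iff_imp]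
      intro hvu
      refine ⟨{v'}, ?_⟩
      have h1 : margin f {u} (({v'} : Finset α) \ {v'}) = 0 := by
        simp [margin, hf]
      have h2 : margin f {u} ({v'} : Finset α) = 1 := by
        have : ({u} ∪ {v'} : Finset α).card = 2 := by
          rw [Finset.card_union_of_disjoint (Finset.disjoint_singleton.mpr (Ne.symm hvu))]; simp
        simp [margin, hf, this, Finset.card_pair (Ne.symm hvu)]
      rw [h1, h2]; norm_num
    have hcardd : ∀ u : α, (depPlus f u).card = m - 1 := by
      intro u
      rw [hdep u, Finset.card_erase_of_mem (Finset.mem_univ u), Finset.card_univ, hcard]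
    rw [smDegree]
    apply le_antisymm
    · exact Finset.sup_le fun u _ => le_of_eq (hcardd u)
    · have h := Finset.le_sup (f := fun u : α => (depPlus f u).card) (Finset.mem_univ w)
      simp only [hcardd w] at h
      exact h
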